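/- Fix s>1, a bounded open set U ⊆ ℝ^d and h₁>h>0. The inclusion map D^{(s)}_{L^∞,h₁}(U) → D^{(s)}_{L^∞,h}(U) is a compact operator: it maps the closed unit ball of D^{(s)}_{L^∞,h₁}(U) to a relatively compact subset of D^{(s)}_{L^∞,h}(U). -/

import Mathlib

open MeasureTheory Filter Set
open scoped BigOperators ENNReal NNReal Topology

noncomputable section

/-- The order `|α|` of a multi-index `α`. -/
def mOrder {d : ℕ} (α : Fin d → ℕ) : ℕ := ∑ i, α i

/-- The factorial `α!` of a multi-index `α`. -/
def mFact {d : ℕ} (α : Fin d → ℕ) : ℕ := ∏ i, Nat.factorial (α i)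

variable {d : ℕ} {F : Type*} [NormedAddCommGroup F] [NormedSpace ℝ F]

/-- First-order partial derivative `∂_i`. -/
def pd (i : Fin d) (f : (Fin d → ℝ) → F) : (Fin d → ℝ) → F :=
  fun x => fderiv ℝ f x (Pi.single i 1)

/-- Iterated partial derivative `∂_i^n`. -/
def pdPow (i : Fin d) : ℕ → ((Fin d → ℝ) → F) → ((Fin d → ℝ) → F)
  | 0 => id
  | n + 1 => fun f => pd i (pdPow i n f)

/-- Iterated partial derivative `∂^α` for a multi-index `α`. -/
def pdm (α : Fin d → ℕ) (f : (Fin d → ℝ) → F) : (Fin d → ℝ) → F :=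
  (List.finRange d).foldr (fun i g => pdPow i (α i) g) f

/-- The operator `D^α = i^{-|α|} ∂^α` for complex-valued functions. -/
def Dm (α : Fin d → ℕ) (f : (Fin d → ℝ) → ℂ) : (Fin d → ℝ) → ℂ :=
  fun x => (-Complex.I) ^ (mOrder α) * pdm α f x

/-- `φ` is a Beurling–Gevrey test function of class `(s)` on `U`. -/
def IsGevreyTest (s : ℝ) (U : Set (Fin d → ℝ)) (φ : (Fin d → ℝ) → F) : Prop :=
  ContDiff ℝ (⊤ : ℕ∞) φ ∧ HasCompactSupport φ ∧ tsupport φ ⊆ U ∧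
    ∀ h : ℝ, 0 < h → ∃ C : ℝ, ∀ (α : Fin d → ℕ) (x : Fin d → ℝ),
      ‖pdm α φ x‖ ≤ C * h ^ (mOrder α) * (mFact α : ℝ) ^ s

/-- The `ℓ^p`-type norm of a family of extended reals (sup for `p = ∞`). -/
def seqLpNorm {ι : Type*} (p : ℝ≥0∞) (w : ι → ℝ≥0∞) : ℝ≥0∞ :=
  if p = ∞ then ⨆ i, w i else (∑' i, (w i) ^ p.toReal) ^ (1 / p.toReal)

/-- The norm of the space `D^s_{L^p,h}(U)`:
`(∑_α h^{p|α|} ‖D^α φ‖_{L^p(U)}^p / α!^{ps})^{1/p}` (sup over `α` when `p = ∞`). -/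
def gNorm (s h : ℝ) (p : ℝ≥0∞) (U : Set (Fin d → ℝ)) (φ : (Fin d → ℝ) → F) : ℝ≥0∞ :=
  seqLpNorm p (fun α : Fin d → ℕ =>
    ENNReal.ofReal (h ^ (mOrder α) / (mFact α : ℝ) ^ s) *
      eLpNorm (pdm α φ) p (volume.restrict U))

/-- Membership in `D^{(s)}_{L^p,h}(U)`, the closure of `D^{(s)}(U)` in `D^s_{L^p,h}(U)`. -/
def MemD (s h : ℝ) (p : ℝ≥0∞) (U : Set (Fin d → ℝ)) (φ : (Fin d → ℝ) → F) : Prop :=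
  ContDiffOn ℝ (⊤ : ℕ∞) φ U ∧ gNorm s h p U φ < ⊤ ∧
    ∀ ε : ℝ, 0 < ε → ∃ ψ : (Fin d → ℝ) → F, IsGevreyTest s U ψ ∧
      gNorm s h p U (φ - ψ) < ENNReal.ofReal ε

/-- Membership in `Ḃ^{(s)}(U)`, the closure of `D^{(s)}(U)` with respect to the
family of norms `p_h`, `h > 0` (the norms being directed, closure with respect to the
whole family amounts to approximability in each norm separately). -/
def MemBdot (s : ℝ) (U : Set (Fin d → ℝ)) (φ : (Fin d → ℝ) → F) : Prop :=
  ContDiffOn ℝ (⊤ : ℕ∞) φ U ∧ (∀ h : ℝ, 0 < h → gNorm s h ∞ U φ < ⊤) ∧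
    ∀ h ε : ℝ, 0 < h → 0 < ε → ∃ ψ : (Fin d → ℝ) → F, IsGevreyTest s U ψ ∧
      gNorm s h ∞ U (φ - ψ) < ENNReal.ofReal ε

/-- A continuous linear functional on the Banach space `D^{(s)}_{L^q,h}(U)`. -/
def IsDualD (s h : ℝ) (q : ℝ≥0∞) (U : Set (Fin d → ℝ)) (T : ((Fin d → ℝ) → ℂ) → ℂ) : Prop :=
  (∀ φ ψ, MemD s h q U φ → MemD s h q U ψ → T (φ + ψ) = T φ + T ψ) ∧
  (∀ (c : ℂ) (φ), MemD s h q U φ → T (c • φ) = c * T φ) ∧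
  ∃ M : ℝ, ∀ φ, MemD s h q U φ → ‖T φ‖ ≤ M * (gNorm s h q U φ).toReal

/-- A continuous linear map from `Ḃ^{(s)}(U)` into a Banach space `E` (over `ℂ`). -/
def IsContLinBdot (s : ℝ) (U : Set (Fin d → ℝ)) {E : Type*} [NormedAddCommGroup E]
    [NormedSpace ℂ E] (f : ((Fin d → ℝ) → ℂ) → E) : Prop :=
  (∀ φ ψ, MemBdot s U φ → MemBdot s U ψ → f (φ + ψ) = f φ + f ψ) ∧
  (∀ (c : ℂ) (φ), MemBdot s U φ → f (c • φ) = c • f φ) ∧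
  ∃ h M : ℝ, 0 < h ∧ ∀ φ, MemBdot s U φ → ‖f φ‖ ≤ M * (gNorm s h ∞ U φ).toReal

lemma top1 : ((⊤:ℕ∞) : WithTop ℕ∞) + 1 ≤ ((⊤:ℕ∞) : WithTop ℕ∞) := le_of_eq ENat.coe_top_add_one
lemma top1' : (1 : WithTop ℕ∞) ≤ ((⊤:ℕ∞) : WithTop ℕ∞) := by
  calc (1 : WithTop ℕ∞) = ((1:ℕ∞) : WithTop ℕ∞) := by norm_cast
  _ ≤ _ := WithTop.coe_le_coe.2 le_top
lemma top2 : (2 : WithTop ℕ∞) ≤ ((⊤:ℕ∞) : WithTop ℕ∞) := by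
  calc (2 : WithTop ℕ∞) = ((2:ℕ∞) : WithTop ℕ∞) := by norm_cast
  _ ≤ _ := WithTop.coe_le_coe.2 le_top

lemma contDiff_pd {f : (Fin d → ℝ) → F} (hf : ContDiff ℝ (⊤:ℕ∞) f) (i : Fin d) :
    ContDiff ℝ (⊤:ℕ∞) (pd i f) :=
  (hf.fderiv_right top1).clm_apply contDiff_const

lemma contDiff_pdPow {f : (Fin d → ℝ) → F} (hf : ContDiff ℝ (⊤:ℕ∞) f) (i : Fin d) (n : ℕ) :
    ContDiff ℝ (⊤:ℕ∞) (pdPow i n f) := by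
  induction n with
  | zero => exact hf
  | succ n ih => exact contDiff_pd ih i

lemma contDiff_foldr {f : (Fin d → ℝ) → F} (hf : ContDiff ℝ (⊤:ℕ∞) f) (α : Fin d → ℕ)
    (l : List (Fin d)) : ContDiff ℝ (⊤:ℕ∞) (l.foldr (fun i g => pdPow i (α i) g) f) := by
  induction l with
  | nil => exact hf
  | cons j t ih => exact contDiff_pdPow ih j (α j)

lemma contDiff_pdm {f : (Fin d → ℝ) → F} (hf : ContDiff ℝ (⊤:ℕ∞) f) (α : Fin d → ℕ) :
    ContDiff ℝ (⊤:ℕ∞) (pdm α f) := contDiff_foldr hf α _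

lemma pd_add {f g : (Fin d → ℝ) → F} (hf : Differentiable ℝ f) (hg : Differentiable ℝ g)
    (i : Fin d) : pd i (f + g) = pd i f + pd i g := by
  funext x
  have e : (f + g) = fun y => f y + g y := rfl
  simp only [pd, Pi.add_apply, e]
  rw [fderiv_fun_add (hf x) (hg x)]
  simp

lemma pd_neg (f : (Fin d → ℝ) → F) (i : Fin d) : pd i (-f) = - pd i f := by
  funext x
  have e : (-f) = fun y => -(f y) := rfl
  simp only [pd, Pi.neg_apply, e]
  rw [fderiv_fun_neg]
  simp

lemma pd_zero (i : Fin d) : pd i (0 : (Fin d → ℝ) → F) = 0 := by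
  funext x
  have e : (0 : (Fin d → ℝ) → F) = fun _ => (0:F) := rfl
  simp only [pd, Pi.zero_apply, e]
  rw [fderiv_fun_const]
  simp

lemma pd_comm {f : (Fin d → ℝ) → F} (hf : ContDiff ℝ (⊤:ℕ∞) f) (i j : Fin d) :
    pd i (pd j f) = pd j (pd i f) := by
  funext x
  have hsymm : IsSymmSndFDerivAt ℝ f x := (hf.contDiffAt).isSymmSndFDerivAt (by simp only [minSmoothness_of_isRCLikeNormedField]; exact top2)
  have hdf : DifferentiableAt ℝ (fderiv ℝ f) x :=
    ((hf.fderiv_right top1).differentiable (by simp)) x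
  have h1 : ∀ k m : Fin d, pd k (pd m f) x
      = fderiv ℝ (fderiv ℝ f) x (Pi.single k 1) (Pi.single m 1) := by
    intro k m
    show fderiv ℝ (fun y => fderiv ℝ f y (Pi.single m 1)) x (Pi.single k 1) = _
    rw [fderiv_clm_apply hdf (differentiableAt_const _)]
    simp
  rw [h1, h1, hsymm.eq]

-- chunk 2: commutation
lemma pd_pdPow_comm {f : (Fin d → ℝ) → F} (hf : ContDiff ℝ (⊤:ℕ∞) f) (i j : Fin d) (n : ℕ) :
    pd i (pdPow j n f) = pdPow j n (pd i f) := by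
  induction n with
  | zero => rfl
  | succ n ih =>
    show pd i (pd j (pdPow j n f)) = pd j (pdPow j n (pd i f))
    rw [pd_comm (contDiff_pdPow hf j n) i j, ih]

lemma pd_foldr_comm {f : (Fin d → ℝ) → F} (hf : ContDiff ℝ (⊤:ℕ∞) f) (i : Fin d)
    (α : Fin d → ℕ) (l : List (Fin d)) :
    pd i (l.foldr (fun k g => pdPow k (α k) g) f)
      = l.foldr (fun k g => pdPow k (α k) g) (pd i f) := by
  induction l with
  | nil => rfl
  | cons j t ih =>
    show pd i (pdPow j (α j) _) = _
    rw [pd_pdPow_comm (contDiff_foldr hf α t) i j, ih]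
    rfl

def madd {d : ℕ} (α : Fin d → ℕ) (i : Fin d) : Fin d → ℕ := fun k => α k + (if k = i then 1 else 0)

lemma madd_apply_ne {α : Fin d → ℕ} {i j : Fin d} (h : j ≠ i) : madd α i j = α j := by
  simp [madd, h]

lemma madd_apply_self {α : Fin d → ℕ} {i : Fin d} : madd α i i = α i + 1 := by
  simp [madd]

lemma foldr_congr {f : (Fin d → ℝ) → F} {α β : Fin d → ℕ} (l : List (Fin d))
    (h : ∀ j ∈ l, α j = β j) :
    l.foldr (fun k g => pdPow k (α k) g) f = l.foldr (fun k g => pdPow k (β k) g) f := by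
  induction l with
  | nil => rfl
  | cons j t ih =>
    show pdPow j (α j) _ = pdPow j (β j) _
    rw [h j List.mem_cons_self, ih (fun k hk => h k (List.mem_cons_of_mem j hk))]

lemma foldr_add_single {f : (Fin d → ℝ) → F} (hf : ContDiff ℝ (⊤:ℕ∞) f) (i : Fin d)
    (α : Fin d → ℕ) (l : List (Fin d)) (hnd : l.Nodup) (hi : i ∈ l) :
    l.foldr (fun k g => pdPow k ((madd α i) k) g) f
      = l.foldr (fun k g => pdPow k (α k) g) (pd i f) := by
  induction l with
  | nil => simp at hi
  | cons j t ih =>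
    rcases List.nodup_cons.1 hnd with ⟨hjt, hndt⟩
    by_cases hji : j = i
    · subst hji
      have hjt' : ∀ k ∈ t, (madd α j) k = α k := by
        intro k hk
        exact madd_apply_ne (fun h => hjt (h ▸ hk))
      show pdPow j ((madd α j) j) _ = _
      rw [foldr_congr t hjt', madd_apply_self]
      show pd j (pdPow j (α j) (List.foldr (fun k g => pdPow k (α k) g) f t))
        = pdPow j (α j) (List.foldr (fun k g => pdPow k (α k) g) (pd j f) t)
      rw [pd_pdPow_comm (contDiff_foldr hf α t) j j, pd_foldr_comm hf j α t]
    · have hit : i ∈ t := by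
        rcases List.mem_cons.1 hi with h | h
        · exact absurd h.symm hji
        · exact h
      show pdPow j ((madd α i) j) _ = pdPow j (α j) _
      rw [madd_apply_ne hji, ih hndt hit]

lemma pdm_add_single {f : (Fin d → ℝ) → F} (hf : ContDiff ℝ (⊤:ℕ∞) f) (i : Fin d)
    (α : Fin d → ℕ) : pdm (madd α i) f = pdm α (pd i f) :=
  foldr_add_single hf i α (List.finRange d) (List.nodup_finRange d) (List.mem_finRange i)

lemma pd_pdm_comm {f : (Fin d → ℝ) → F} (hf : ContDiff ℝ (⊤:ℕ∞) f) (i : Fin d)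
    (α : Fin d → ℕ) : pd i (pdm α f) = pdm (madd α i) f := by
  rw [pdm_add_single hf i α]
  exact pd_foldr_comm hf i α (List.finRange d)

-- chunk 3: algebra of pdm, support, on-U versions
lemma pdPow_add {f g : (Fin d → ℝ) → F} (hf : ContDiff ℝ (⊤:ℕ∞) f) (hg : ContDiff ℝ (⊤:ℕ∞) g)
    (i : Fin d) (n : ℕ) : pdPow i n (f + g) = pdPow i n f + pdPow i n g := by
  induction n with
  | zero => rfl
  | succ n ih =>
    show pd i (pdPow i n (f+g)) = pd i (pdPow i n f) + pd i (pdPow i n g)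
    rw [ih, pd_add ((contDiff_pdPow hf i n).differentiable (by simp))
      ((contDiff_pdPow hg i n).differentiable (by simp))]

lemma foldr_add {f g : (Fin d → ℝ) → F} (hf : ContDiff ℝ (⊤:ℕ∞) f) (hg : ContDiff ℝ (⊤:ℕ∞) g)
    (α : Fin d → ℕ) (l : List (Fin d)) :
    l.foldr (fun k u => pdPow k (α k) u) (f + g)
      = l.foldr (fun k u => pdPow k (α k) u) f + l.foldr (fun k u => pdPow k (α k) u) g := by
  induction l with
  | nil => rfl
  | cons j t ih =>
    show pdPow j (α j) _ = pdPow j (α j) _ + pdPow j (α j) _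
    rw [ih, pdPow_add (contDiff_foldr hf α t) (contDiff_foldr hg α t)]

lemma pdm_add {f g : (Fin d → ℝ) → F} (hf : ContDiff ℝ (⊤:ℕ∞) f) (hg : ContDiff ℝ (⊤:ℕ∞) g)
    (α : Fin d → ℕ) : pdm α (f + g) = pdm α f + pdm α g := foldr_add hf hg α _

lemma pdPow_neg (f : (Fin d → ℝ) → F) (i : Fin d) (n : ℕ) : pdPow i n (-f) = - pdPow i n f := by
  induction n with
  | zero => rfl
  | succ n ih =>
    show pd i (pdPow i n (-f)) = - pd i (pdPow i n f)
    rw [ih, pd_neg]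

lemma foldr_neg (f : (Fin d → ℝ) → F) (α : Fin d → ℕ) (l : List (Fin d)) :
    l.foldr (fun k u => pdPow k (α k) u) (-f) = - l.foldr (fun k u => pdPow k (α k) u) f := by
  induction l with
  | nil => rfl
  | cons j t ih =>
    show pdPow j (α j) _ = - pdPow j (α j) _
    rw [ih, pdPow_neg]

lemma pdm_neg (f : (Fin d → ℝ) → F) (α : Fin d → ℕ) : pdm α (-f) = - pdm α f := foldr_neg f α _

lemma pdPow_zero (i : Fin d) (n : ℕ) : pdPow i n (0 : (Fin d → ℝ) → F) = 0 := by
  induction n with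
  | zero => rfl
  | succ n ih =>
    show pd i (pdPow i n (0:(Fin d → ℝ) → F)) = 0
    rw [ih, pd_zero]

lemma pdm_zero (α : Fin d → ℕ) : pdm α (0 : (Fin d → ℝ) → F) = 0 := by
  show (List.finRange d).foldr (fun k u => pdPow k (α k) u) 0 = 0
  induction (List.finRange d) with
  | nil => rfl
  | cons j t ih =>
    show pdPow j (α j) (t.foldr _ (0:(Fin d → ℝ) → F)) = 0
    rw [ih, pdPow_zero]

lemma tsupport_pd (f : (Fin d → ℝ) → F) (i : Fin d) : tsupport (pd i f) ⊆ tsupport f := by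
  apply closure_minimal _ (isClosed_tsupport f)
  intro x hx
  by_contra hxt
  apply hx
  have hev : f =ᶠ[nhds x] 0 := notMem_tsupport_iff_eventuallyEq.1 hxt
  have : fderiv ℝ f x = fderiv ℝ (fun _ => (0:F)) x := hev.fderiv_eq
  show pd i f x = 0
  simp only [pd, this, fderiv_const]
  simp

lemma tsupport_pdPow (f : (Fin d → ℝ) → F) (i : Fin d) (n : ℕ) :
    tsupport (pdPow i n f) ⊆ tsupport f := by
  induction n with
  | zero => exact subset_rfl
  | succ n ih => exact (tsupport_pd (pdPow i n f) i).trans ih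

lemma tsupport_pdm (f : (Fin d → ℝ) → F) (α : Fin d → ℕ) :
    tsupport (pdm α f) ⊆ tsupport f := by
  show tsupport ((List.finRange d).foldr _ _) ⊆ _
  induction (List.finRange d) with
  | nil => exact subset_rfl
  | cons j t ih =>
    exact (tsupport_pdPow (t.foldr _ f) j (α j)).trans ih

-- chunk 4: on-U versions
variable {U : Set (Fin d → ℝ)}

lemma contDiffOn_pd (hU : IsOpen U) {f : (Fin d → ℝ) → F} (hf : ContDiffOn ℝ (⊤:ℕ∞) f U)
    (i : Fin d) : ContDiffOn ℝ (⊤:ℕ∞) (pd i f) U :=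
  (hf.fderiv_of_isOpen hU top1).clm_apply contDiffOn_const

lemma contDiffOn_pdPow (hU : IsOpen U) {f : (Fin d → ℝ) → F} (hf : ContDiffOn ℝ (⊤:ℕ∞) f U)
    (i : Fin d) (n : ℕ) : ContDiffOn ℝ (⊤:ℕ∞) (pdPow i n f) U := by
  induction n with
  | zero => exact hf
  | succ n ih => exact contDiffOn_pd hU ih i

lemma contDiffOn_foldr (hU : IsOpen U) {f : (Fin d → ℝ) → F} (hf : ContDiffOn ℝ (⊤:ℕ∞) f U)
    (α : Fin d → ℕ) (l : List (Fin d)) :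
    ContDiffOn ℝ (⊤:ℕ∞) (l.foldr (fun k u => pdPow k (α k) u) f) U := by
  induction l with
  | nil => exact hf
  | cons j t ih => exact contDiffOn_pdPow hU ih j (α j)

lemma contDiffOn_pdm (hU : IsOpen U) {f : (Fin d → ℝ) → F} (hf : ContDiffOn ℝ (⊤:ℕ∞) f U)
    (α : Fin d → ℕ) : ContDiffOn ℝ (⊤:ℕ∞) (pdm α f) U := contDiffOn_foldr hU hf α _

lemma pd_congrOn (hU : IsOpen U) {f g : (Fin d → ℝ) → F} (h : EqOn f g U) (i : Fin d) :
    EqOn (pd i f) (pd i g) U := by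
  intro x hx
  have hev : f =ᶠ[nhds x] g := Filter.eventuallyEq_of_mem (hU.mem_nhds hx) h
  show fderiv ℝ f x (Pi.single i 1) = fderiv ℝ g x (Pi.single i 1)
  rw [hev.fderiv_eq]

lemma pdPow_congrOn (hU : IsOpen U) {f g : (Fin d → ℝ) → F} (h : EqOn f g U) (i : Fin d)
    (n : ℕ) : EqOn (pdPow i n f) (pdPow i n g) U := by
  induction n with
  | zero => exact h
  | succ n ih => exact pd_congrOn hU ih i

lemma pd_add_on (hU : IsOpen U) {f g : (Fin d → ℝ) → F} (hf : ContDiffOn ℝ (⊤:ℕ∞) f U)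
    (hg : ContDiffOn ℝ (⊤:ℕ∞) g U) (i : Fin d) :
    EqOn (pd i (f + g)) (pd i f + pd i g) U := by
  intro x hx
  have hfx : DifferentiableAt ℝ f x :=
    (hf.contDiffAt (hU.mem_nhds hx)).differentiableAt (by simp)
  have hgx : DifferentiableAt ℝ g x :=
    (hg.contDiffAt (hU.mem_nhds hx)).differentiableAt (by simp)
  have e : (f + g) = fun y => f y + g y := rfl
  show fderiv ℝ (f+g) x (Pi.single i 1) = _
  rw [e, fderiv_fun_add hfx hgx]
  simp [pd]

lemma pdPow_add_on (hU : IsOpen U) {f g : (Fin d → ℝ) → F} (hf : ContDiffOn ℝ (⊤:ℕ∞) f U)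
    (hg : ContDiffOn ℝ (⊤:ℕ∞) g U) (i : Fin d) (n : ℕ) :
    EqOn (pdPow i n (f + g)) (pdPow i n f + pdPow i n g) U := by
  induction n with
  | zero => exact fun x _ => rfl
  | succ n ih =>
    have h1 : EqOn (pd i (pdPow i n (f+g))) (pd i (pdPow i n f + pdPow i n g)) U :=
      pd_congrOn hU ih i
    have h2 : EqOn (pd i (pdPow i n f + pdPow i n g)) (pd i (pdPow i n f) + pd i (pdPow i n g)) U :=
      pd_add_on hU (contDiffOn_pdPow hU hf i n) (contDiffOn_pdPow hU hg i n) i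
    exact h1.trans h2

lemma foldr_add_on (hU : IsOpen U) {f g : (Fin d → ℝ) → F} (hf : ContDiffOn ℝ (⊤:ℕ∞) f U)
    (hg : ContDiffOn ℝ (⊤:ℕ∞) g U) (α : Fin d → ℕ) (l : List (Fin d)) :
    EqOn (l.foldr (fun k u => pdPow k (α k) u) (f + g))
      (l.foldr (fun k u => pdPow k (α k) u) f + l.foldr (fun k u => pdPow k (α k) u) g) U := by
  induction l with
  | nil => exact fun x _ => rfl
  | cons j t ih =>
    have h1 : EqOn (pdPow j (α j) (t.foldr (fun k u => pdPow k (α k) u) (f+g)))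
        (pdPow j (α j) (t.foldr (fun k u => pdPow k (α k) u) f
          + t.foldr (fun k u => pdPow k (α k) u) g)) U := pdPow_congrOn hU ih j (α j)
    have h2 := pdPow_add_on hU (contDiffOn_foldr hU hf α t) (contDiffOn_foldr hU hg α t) j (α j)
    exact h1.trans h2

lemma pdm_add_on (hU : IsOpen U) {f g : (Fin d → ℝ) → F} (hf : ContDiffOn ℝ (⊤:ℕ∞) f U)
    (hg : ContDiffOn ℝ (⊤:ℕ∞) g U) (α : Fin d → ℕ) :
    EqOn (pdm α (f + g)) (pdm α f + pdm α g) U := foldr_add_on hU hf hg α _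

-- chunk 5: gNorm machinery
lemma gNorm_top_eq (s h : ℝ) (U : Set (Fin d → ℝ)) (φ : (Fin d → ℝ) → F) :
    gNorm s h ∞ U φ = ⨆ α : Fin d → ℕ,
      ENNReal.ofReal (h ^ (mOrder α) / (mFact α : ℝ) ^ s) *
        eLpNormEssSup (pdm α φ) (volume.restrict U) := by
  simp only [gNorm, seqLpNorm, eLpNorm_exponent_top, if_true, eq_self_iff_true]

lemma gNorm_le_iff {s h : ℝ} {U : Set (Fin d → ℝ)} {φ : (Fin d → ℝ) → F} {C : ℝ≥0∞} :
    gNorm s h ∞ U φ ≤ C ↔ ∀ α : Fin d → ℕ,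
      ENNReal.ofReal (h ^ (mOrder α) / (mFact α : ℝ) ^ s) *
        eLpNormEssSup (pdm α φ) (volume.restrict U) ≤ C := by
  rw [gNorm_top_eq]
  constructor
  · intro h' α
    exact le_trans (le_iSup (fun β : Fin d → ℕ => ENNReal.ofReal (h ^ (mOrder β) /
      (mFact β : ℝ) ^ s) * eLpNormEssSup (pdm β φ) (volume.restrict U)) α) h'
  · exact iSup_le

lemma le_gNorm (s h : ℝ) (U : Set (Fin d → ℝ)) (φ : (Fin d → ℝ) → F) (α : Fin d → ℕ) :
    ENNReal.ofReal (h ^ (mOrder α) / (mFact α : ℝ) ^ s) *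
      eLpNormEssSup (pdm α φ) (volume.restrict U) ≤ gNorm s h ∞ U φ := by
  rw [gNorm_top_eq]
  exact le_iSup (fun β : Fin d → ℕ => ENNReal.ofReal (h ^ (mOrder β) /
    (mFact β : ℝ) ^ s) * eLpNormEssSup (pdm β φ) (volume.restrict U)) α

lemma gNorm_neg (s h : ℝ) (U : Set (Fin d → ℝ)) (φ : (Fin d → ℝ) → F) :
    gNorm s h ∞ U (-φ) = gNorm s h ∞ U φ := by
  unfold gNorm
  congr 1
  funext α
  rw [pdm_neg, eLpNorm_neg]

lemma gNorm_zero_fun (s h : ℝ) (U : Set (Fin d → ℝ)) :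
    gNorm s h ∞ U (0 : (Fin d → ℝ) → F) = 0 := by
  rw [gNorm_top_eq]
  simp only [pdm_zero]
  have hz : eLpNormEssSup (0 : (Fin d → ℝ) → F) (volume.restrict U) = 0 := by
    rw [← eLpNorm_exponent_top]; exact eLpNorm_zero
  simp [hz]

lemma aesm_pdm (hU : IsOpen U) {φ : (Fin d → ℝ) → F} (hφ : ContDiffOn ℝ (⊤:ℕ∞) φ U)
    (α : Fin d → ℕ) : AEStronglyMeasurable (pdm α φ) (volume.restrict U) :=
  ContinuousOn.aestronglyMeasurable (contDiffOn_pdm hU hφ α).continuousOn hU.measurableSet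

lemma gNorm_triangle (hU : IsOpen U) {f g : (Fin d → ℝ) → F}
    (hf : ContDiffOn ℝ (⊤:ℕ∞) f U) (hg : ContDiffOn ℝ (⊤:ℕ∞) g U) (s h : ℝ) :
    gNorm s h ∞ U (f + g) ≤ gNorm s h ∞ U f + gNorm s h ∞ U g := by
  rw [gNorm_top_eq]
  apply iSup_le
  intro α
  have hae : pdm α (f + g) =ᵐ[volume.restrict U] (pdm α f + pdm α g) := by
    filter_upwards [ae_restrict_mem hU.measurableSet] with x hx
    exact pdm_add_on hU hf hg α hx
  calc ENNReal.ofReal (h ^ (mOrder α) / (mFact α : ℝ) ^ s) *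
      eLpNormEssSup (pdm α (f+g)) (volume.restrict U)
      = ENNReal.ofReal (h ^ (mOrder α) / (mFact α : ℝ) ^ s) *
        eLpNorm (pdm α f + pdm α g) ∞ (volume.restrict U) := by
        rw [← eLpNorm_exponent_top, eLpNorm_congr_ae hae]
    _ ≤ ENNReal.ofReal (h ^ (mOrder α) / (mFact α : ℝ) ^ s) *
        (eLpNorm (pdm α f) ∞ (volume.restrict U) + eLpNorm (pdm α g) ∞ (volume.restrict U)) := by
        gcongr
        exact eLpNorm_add_le (aesm_pdm hU hf α) (aesm_pdm hU hg α) le_top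
    _ ≤ gNorm s h ∞ U f + gNorm s h ∞ U g := by
        rw [mul_add]
        gcongr
        · rw [eLpNorm_exponent_top]; exact le_gNorm s h U f α
        · rw [eLpNorm_exponent_top]; exact le_gNorm s h U g α

lemma one_le_mFact_rpow {α : Fin d → ℕ} {s : ℝ} (hs : 0 ≤ s) : 1 ≤ ((mFact α : ℝ)) ^ s := by
  have h1 : (1:ℝ) ≤ (mFact α : ℝ) := by
    have : 1 ≤ mFact α := Nat.one_le_iff_ne_zero.2 (by
      simp only [mFact]
      exact Finset.prod_ne_zero_iff.2 fun i _ => (Nat.factorial_pos (α i)).ne')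
    exact_mod_cast this
  exact Real.one_le_rpow h1 hs

lemma mFact_rpow_pos {α : Fin d → ℕ} (s : ℝ) : 0 < ((mFact α : ℝ)) ^ s := by
  apply Real.rpow_pos_of_pos
  have : 1 ≤ mFact α := Nat.one_le_iff_ne_zero.2 (by
    simp only [mFact]
    exact Finset.prod_ne_zero_iff.2 fun i _ => (Nat.factorial_pos (α i)).ne')
  exact_mod_cast lt_of_lt_of_le one_pos (by exact_mod_cast this)

lemma gNorm_mono_h {s h h' : ℝ} (hh : 0 ≤ h) (hh' : h ≤ h') (U : Set (Fin d → ℝ))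
    (φ : (Fin d → ℝ) → F) : gNorm s h ∞ U φ ≤ gNorm s h' ∞ U φ := by
  rw [gNorm_top_eq, gNorm_top_eq]
  apply iSup_mono
  intro α
  apply mul_le_mul' _ le_rfl
  apply ENNReal.ofReal_le_ofReal
  gcongr <;> first
    | exact le_of_lt (mFact_rpow_pos s)
    | exact pow_le_pow_left₀ hh hh' (mOrder α)
    | assumption

-- chunk 6: essSup vs pointwise
lemma essSup_le_of_forall (hU : IsOpen U) {f : (Fin d → ℝ) → F} {C : ℝ}
    (h : ∀ x ∈ U, ‖f x‖ ≤ C) :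
    eLpNormEssSup f (volume.restrict U) ≤ ENNReal.ofReal C := by
  apply eLpNormEssSup_le_of_ae_bound
  rw [ae_restrict_iff' hU.measurableSet]
  exact ae_of_all _ h

lemma pointwise_le_essSup {f : (Fin d → ℝ) → F} (hf : Continuous f) (hU : IsOpen U)
    {x : Fin d → ℝ} (hx : x ∈ U) :
    (‖f x‖₊ : ℝ≥0∞) ≤ eLpNormEssSup f (volume.restrict U) := by
  by_contra hcon
  push_neg at hcon
  obtain ⟨r, hr1, hr2⟩ := exists_between hcon
  set V := {y | r < (‖f y‖₊ : ℝ≥0∞)} with hV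
  have hVopen : IsOpen V := by
    have hcont : Continuous fun y => (‖f y‖₊ : ℝ≥0∞) :=
      ENNReal.continuous_coe.comp hf.nnnorm
    exact isOpen_lt continuous_const hcont
  have hxV : x ∈ V ∩ U := ⟨hr2, hx⟩
  have hpos : 0 < volume (V ∩ U) :=
    (hVopen.inter hU).measure_pos _ ⟨x, hxV⟩
  have hnull : (volume.restrict U) V = 0 := by
    have hae : ∀ᵐ y ∂(volume.restrict U), (‖f y‖₊ : ℝ≥0∞) ≤ eLpNormEssSup f (volume.restrict U) :=
      ae_le_eLpNormEssSup
    have : ∀ᵐ y ∂(volume.restrict U), y ∉ V := by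
      filter_upwards [hae] with y hy
      intro hyV
      exact lt_irrefl r (lt_of_lt_of_le hyV (hy.trans hr1.le))
    simpa [ae_iff, V] using this
  rw [Measure.restrict_apply hVopen.measurableSet] at hnull
  exact absurd hnull (ne_of_gt hpos)

-- chunk 7: pointwise bounds and Lipschitz estimates for elements of the ball
lemma mOrder_madd (α : Fin d → ℕ) (i : Fin d) : mOrder (madd α i) = mOrder α + 1 := by
  simp only [mOrder, madd]
  rw [Finset.sum_add_distrib]
  congr 1
  simp

lemma pdm_pointwise_bound (hU : IsOpen U) {ψ : (Fin d → ℝ) → ℂ}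
    (hψ : ContDiff ℝ (⊤:ℕ∞) ψ) (hsupp : tsupport ψ ⊆ U) {s h₁ : ℝ} (hh₁ : 0 < h₁) {B : ℝ}
    (hB : 0 ≤ B) (hn : gNorm s h₁ ∞ U ψ ≤ ENNReal.ofReal B) (α : Fin d → ℕ) (x : Fin d → ℝ) :
    ‖pdm α ψ x‖ ≤ B * (mFact α : ℝ) ^ s / h₁ ^ (mOrder α) := by
  have hw : (0:ℝ) < h₁ ^ (mOrder α) / (mFact α : ℝ) ^ s :=
    div_pos (pow_pos hh₁ _) (mFact_rpow_pos s)
  have hRHS : B * (mFact α : ℝ) ^ s / h₁ ^ (mOrder α)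
      = B / (h₁ ^ (mOrder α) / (mFact α : ℝ) ^ s) := by
    field_simp
  by_cases hx : x ∈ U
  · have h1 : (‖pdm α ψ x‖₊ : ℝ≥0∞) ≤ eLpNormEssSup (pdm α ψ) (volume.restrict U) :=
      pointwise_le_essSup (contDiff_pdm hψ α).continuous hU hx
    have h2 := gNorm_le_iff.1 hn α
    have h3 : eLpNormEssSup (pdm α ψ) (volume.restrict U)
        ≤ ENNReal.ofReal B / ENNReal.ofReal (h₁ ^ (mOrder α) / (mFact α : ℝ) ^ s) := by
      rw [ENNReal.le_div_iff_mul_le (Or.inl (ENNReal.ofReal_pos.2 hw).ne')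
        (Or.inl ENNReal.ofReal_ne_top)]
      rw [mul_comm]
      exact h2
    have h4 : ENNReal.ofReal B / ENNReal.ofReal (h₁ ^ (mOrder α) / (mFact α : ℝ) ^ s)
        = ENNReal.ofReal (B / (h₁ ^ (mOrder α) / (mFact α : ℝ) ^ s)) :=
      (ENNReal.ofReal_div_of_pos hw).symm
    have h5 : (‖pdm α ψ x‖₊ : ℝ≥0∞) ≤ ENNReal.ofReal (B / (h₁ ^ (mOrder α) / (mFact α : ℝ) ^ s)) :=
      h1.trans (h3.trans_eq h4)
    change ‖pdm α ψ x‖ₑ ≤ _ at h5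
    rw [← ofReal_norm] at h5
    rw [hRHS]
    exact (ENNReal.ofReal_le_ofReal_iff (div_nonneg hB hw.le)).1 h5
  · have hx0 : pdm α ψ x = 0 := by
      apply image_eq_zero_of_notMem_tsupport
      intro hmem
      exact hx (hsupp (tsupport_pdm ψ α hmem))
    rw [hx0, norm_zero, hRHS]
    exact div_nonneg hB hw.le

lemma fderiv_opNorm_bound {g : (Fin d → ℝ) → ℂ} (hg : ContDiff ℝ (⊤:ℕ∞) g) (z : Fin d → ℝ)
    {c : Fin d → ℝ} (hc : ∀ i, ‖pd i g z‖ ≤ c i) :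
    ‖fderiv ℝ g z‖ ≤ ∑ i, c i := by
  apply ContinuousLinearMap.opNorm_le_bound _ (Finset.sum_nonneg fun i _ =>
    (norm_nonneg _).trans (hc i))
  intro v
  have hv : v = ∑ i, v i • (Pi.single i (1:ℝ) : Fin d → ℝ) := by
    funext k
    rw [Finset.sum_apply]
    simp [Pi.single_apply]
  calc ‖fderiv ℝ g z v‖ = ‖∑ i, v i • fderiv ℝ g z (Pi.single i 1)‖ := by
        conv_lhs => rw [hv]
        rw [map_sum]
        congr 1
        exact Finset.sum_congr rfl fun i _ => (fderiv ℝ g z).map_smul _ _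
    _ ≤ ∑ i, ‖v i • fderiv ℝ g z (Pi.single i 1)‖ := norm_sum_le _ _
    _ ≤ ∑ i, c i * ‖v‖ := by
        apply Finset.sum_le_sum
        intro i _
        rw [norm_smul]
        calc ‖v i‖ * ‖fderiv ℝ g z (Pi.single i 1)‖ ≤ ‖v‖ * c i := by
              apply mul_le_mul (norm_le_pi_norm v i) (hc i) (norm_nonneg _) (norm_nonneg _)
          _ = c i * ‖v‖ := mul_comm _ _
    _ = (∑ i, c i) * ‖v‖ := by rw [Finset.sum_mul]

lemma pdm_lipschitz (hU : IsOpen U) {ψ : (Fin d → ℝ) → ℂ}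
    (hψ : ContDiff ℝ (⊤:ℕ∞) ψ) (hsupp : tsupport ψ ⊆ U) {s h₁ : ℝ} (hh₁ : 0 < h₁) {B : ℝ}
    (hB : 0 ≤ B) (hn : gNorm s h₁ ∞ U ψ ≤ ENNReal.ofReal B) (α : Fin d → ℕ)
    (x y : Fin d → ℝ) :
    ‖pdm α ψ x - pdm α ψ y‖
      ≤ (∑ i, B * (mFact (madd α i) : ℝ) ^ s / h₁ ^ (mOrder α + 1)) * ‖x - y‖ := by
  have hgc : ContDiff ℝ (⊤:ℕ∞) (pdm α ψ) := contDiff_pdm hψ α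
  have hbound : ∀ z, ‖fderiv ℝ (pdm α ψ) z‖
      ≤ ∑ i, B * (mFact (madd α i) : ℝ) ^ s / h₁ ^ (mOrder α + 1) := by
    intro z
    apply fderiv_opNorm_bound hgc z
    intro i
    have h1 : pd i (pdm α ψ) z = pdm (madd α i) ψ z := by
      rw [pd_pdm_comm hψ i α]
    rw [show ‖pd i (pdm α ψ) z‖ = ‖pdm (madd α i) ψ z‖ from by rw [h1]]
    have := pdm_pointwise_bound hU hψ hsupp hh₁ hB hn (madd α i) z
    rwa [mOrder_madd] at this
  have := Convex.norm_image_sub_le_of_norm_fderiv_le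
    (fun z _ => (hgc.differentiable (by simp)) z) (fun z _ => hbound z) convex_univ
    (Set.mem_univ y) (Set.mem_univ x)
  simpa using this

-- chunk 8: misc helpers
lemma apply_le_mOrder (α : Fin d → ℕ) (i : Fin d) : α i ≤ mOrder α :=
  Finset.single_le_sum (fun _ _ => Nat.zero_le _) (Finset.mem_univ i)

lemma finite_mOrder_lt (N : ℕ) : {α : Fin d → ℕ | mOrder α < N}.Finite := by
  apply Set.Finite.subset (Set.Finite.pi (fun _ : Fin d => Set.finite_Iic N))
  intro α hα
  rw [Set.mem_pi]
  intro i _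
  exact le_trans (apply_le_mOrder α i) (le_of_lt hα)

lemma mFact_le_of_le {α : Fin d → ℕ} {N : ℕ} (hle : ∀ i, α i ≤ N) :
    mFact α ≤ (Nat.factorial N) ^ d := by
  calc mFact α ≤ ∏ _i : Fin d, Nat.factorial N :=
        Finset.prod_le_prod' (fun i _ => Nat.factorial_le (hle i))
    _ = (Nat.factorial N) ^ d := by simp [Finset.prod_const, Finset.card_univ]

lemma pdm_sub {f g : (Fin d → ℝ) → F} (hf : ContDiff ℝ (⊤:ℕ∞) f) (hg : ContDiff ℝ (⊤:ℕ∞) g)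
    (α : Fin d → ℕ) : pdm α (f - g) = pdm α f - pdm α g := by
  have e : f - g = f + (-g) := sub_eq_add_neg f g
  rw [e, pdm_add hf (show ContDiff ℝ (⊤:ℕ∞) (-g) from hg.neg), pdm_neg, ← sub_eq_add_neg]

lemma isGevreyTest_memD (hU : IsOpen U) {s h : ℝ} (hh : 0 < h) {ψ : (Fin d → ℝ) → ℂ}
    (hψ : IsGevreyTest s U ψ) : MemD s h ∞ U ψ := by
  obtain ⟨hsm, hcs, hsupp, hbd⟩ := hψ
  obtain ⟨C, hC⟩ := hbd (1/h) (by positivity)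
  refine ⟨hsm.contDiffOn, ?_, ?_⟩
  · have hfin : gNorm s h ∞ U ψ ≤ ENNReal.ofReal C := by
      apply gNorm_le_iff.2
      intro α
      have h1 : eLpNormEssSup (pdm α ψ) (volume.restrict U)
          ≤ ENNReal.ofReal (C * (1/h) ^ (mOrder α) * (mFact α : ℝ) ^ s) :=
        essSup_le_of_forall hU (fun x _ => hC α x)
      have hw0 : (0:ℝ) ≤ h ^ (mOrder α) / (mFact α : ℝ) ^ s :=
        div_nonneg (pow_nonneg hh.le _) (mFact_rpow_pos s).le
      calc ENNReal.ofReal (h ^ (mOrder α) / (mFact α : ℝ) ^ s) *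
            eLpNormEssSup (pdm α ψ) (volume.restrict U)
          ≤ ENNReal.ofReal (h ^ (mOrder α) / (mFact α : ℝ) ^ s) *
            ENNReal.ofReal (C * (1/h) ^ (mOrder α) * (mFact α : ℝ) ^ s) :=
            mul_le_mul' le_rfl h1
        _ = ENNReal.ofReal ((h ^ (mOrder α) / (mFact α : ℝ) ^ s) *
            (C * (1/h) ^ (mOrder α) * (mFact α : ℝ) ^ s)) := (ENNReal.ofReal_mul hw0).symm
        _ = ENNReal.ofReal C := by
            congr 1
            have hhk : (h:ℝ) ^ (mOrder α) * (1/h) ^ (mOrder α) = 1 := by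
              rw [← mul_pow]
              simp [hh.ne']
            have hc : ((mFact α : ℝ) ^ s) ≠ 0 := (mFact_rpow_pos s (α := α)).ne'
            have e2 : (h ^ mOrder α / (mFact α : ℝ) ^ s) *
                (C * (1/h) ^ mOrder α * (mFact α : ℝ) ^ s)
                = C * ((h ^ mOrder α) * (1/h) ^ mOrder α) *
                  (((mFact α : ℝ) ^ s) / ((mFact α : ℝ) ^ s)) := by ring
            rw [e2, hhk, div_self hc, mul_one, mul_one]
    exact lt_of_le_of_lt hfin ENNReal.ofReal_lt_top
  · intro ε hε
    refine ⟨ψ, ⟨hsm, hcs, hsupp, hbd⟩, ?_⟩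
    rw [sub_self, gNorm_zero_fun]
    exact ENNReal.ofReal_pos.2 hε


/-- Fix `s > 1`, a bounded open set `U ⊆ ℝ^d` and `h₁ > h > 0`. The
inclusion `D^{(s)}_{L^∞,h₁}(U) → D^{(s)}_{L^∞,h}(U)` is a compact operator: the image of
the closed unit ball is relatively compact, i.e. totally bounded, in the `h`-norm. -/
theorem statement_13 {d : ℕ} (s : ℝ) (hs : 1 < s)
    (U : Set (Fin d → ℝ)) (hU : IsOpen U) (hUb : Bornology.IsBounded U)
    (h h₁ : ℝ) (hh : 0 < h) (hh1 : h < h₁) :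
    ∀ ε : ℝ, 0 < ε → ∃ Φ : Set ((Fin d → ℝ) → ℂ), Φ.Finite ∧
      (∀ ψ ∈ Φ, MemD s h ∞ U ψ) ∧
      ∀ φ : (Fin d → ℝ) → ℂ, MemD s h₁ ∞ U φ → gNorm s h₁ ∞ U φ ≤ 1 →
        ∃ ψ ∈ Φ, gNorm s h ∞ U (φ - ψ) < ENNReal.ofReal ε := by
  intro ε hε
  have hs0 : (0:ℝ) ≤ s := by linarith
  have hh₁ : 0 < h₁ := hh.trans hh1
  set q : ℝ := h / h₁ with hqdef
  have hq0 : 0 < q := div_pos hh hh₁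
  have hq1 : q < 1 := (div_lt_one hh₁).2 hh1
  obtain ⟨N, hN⟩ := exists_pow_lt_of_lt_one (show (0:ℝ) < ε/16 by linarith) hq1
  -- constants
  set Q : ℝ := ((Nat.factorial N ^ d : ℕ) : ℝ) with hQdef
  have hQ1 : (1:ℝ) ≤ Q := by
    have h1 : 1 ≤ Nat.factorial N ^ d := Nat.one_le_pow _ _ (Nat.factorial_pos N)
    rw [hQdef]
    exact_mod_cast h1
  set Qs : ℝ := Q ^ s with hQsdef
  have hQs1 : (1:ℝ) ≤ Qs := Real.one_le_rpow hQ1 hs0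
  have hQs0 : (0:ℝ) < Qs := lt_of_lt_of_le one_pos hQs1
  set Hm : ℝ := (max 1 (1/h₁)) ^ N with hHmdef
  have hHm1 : (1:ℝ) ≤ Hm := one_le_pow₀ (le_max_left _ _)
  have hHm0 : (0:ℝ) < Hm := lt_of_lt_of_le one_pos hHm1
  have hinvh₁ : ∀ k : ℕ, k ≤ N → 1/h₁ ^ k ≤ Hm := by
    intro k hk
    calc 1/h₁ ^ k = (1/h₁) ^ k := by rw [one_div, one_div, inv_pow]
      _ ≤ (max 1 (1/h₁)) ^ k := pow_le_pow_left₀ (by positivity) (le_max_right _ _) k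
      _ ≤ Hm := pow_le_pow_right₀ (le_max_left _ _) hk
  set R : ℝ := 2 * Qs * Hm with hRdef
  have hR0 : (0:ℝ) < R := by positivity
  set L : ℝ := d * (2 * Qs * Hm) + 1 with hLdef
  have hL1 : (1:ℝ) ≤ L := le_add_of_nonneg_left (by positivity)
  have hL0 : (0:ℝ) < L := lt_of_lt_of_le one_pos hL1
  set W : ℝ := (max 1 h) ^ N with hWdef
  have hW1 : (1:ℝ) ≤ W := one_le_pow₀ (le_max_left _ _)
  have hW0 : (0:ℝ) < W := lt_of_lt_of_le one_pos hW1
  set η : ℝ := ε/(32*W) with hηdef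
  have hη0 : 0 < η := by positivity
  set δ : ℝ := ε/(32*W*L) with hδdef
  have hδ0 : 0 < δ := by positivity
  -- nets
  have hK : IsCompact (closure U) :=
    Metric.isCompact_of_isClosed_isBounded isClosed_closure hUb.closure
  obtain ⟨T, hTfin, hTcov⟩ := (Metric.totallyBounded_iff).1 hK.totallyBounded δ hδ0
  obtain ⟨V, hVfin, hVcov⟩ :=
    (Metric.totallyBounded_iff).1 (isCompact_closedBall (0:ℂ) R).totallyBounded η hη0
  have hIfin : {α : Fin d → ℕ | mOrder α < N}.Finite := finite_mOrder_lt N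
  -- domain of classification maps
  classical
  let D : Finset ((Fin d → ℕ) × (Fin d → ℝ)) := hIfin.toFinset ×ˢ hTfin.toFinset
  let Ball : Set ((Fin d → ℝ) → ℂ) :=
    {χ | IsGevreyTest s U χ ∧ gNorm s h₁ ∞ U χ ≤ ENNReal.ofReal 2}
  let cls : ((Fin d → ℝ) → ℂ) → ((↥D) → ℂ) := fun χ p =>
    if hp : ∃ v ∈ V, dist (pdm p.1.1 χ p.1.2) v < η then hp.choose else 0
  have hclsmem : ∀ χ, cls χ ∈ Set.pi Set.univ (fun _ : ↥D => insert (0:ℂ) V) := by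
    intro χ p _
    show (if hp : ∃ v ∈ V, dist (pdm p.1.1 χ p.1.2) v < η then hp.choose else 0) ∈ _
    split
    · next hp => exact Set.mem_insert_of_mem _ hp.choose_spec.1
    · exact Set.mem_insert _ _
  have hSfin : (Set.pi Set.univ (fun _ : ↥D => insert (0:ℂ) V)).Finite :=
    Set.Finite.pi (fun _ => hVfin.insert 0)
  have hCfin : (cls '' Ball).Finite := hSfin.subset (by
    rintro _ ⟨χ, _, rfl⟩
    exact hclsmem χ)
  refine ⟨(fun c => Function.invFunOn cls Ball c) '' (cls '' Ball), hCfin.image _, ?_, ?_⟩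
  · rintro ψ₀ ⟨c, hc, rfl⟩
    have hex : ∃ a ∈ Ball, cls a = c := by
      obtain ⟨a, ha, rfl⟩ := hc
      exact ⟨a, ha, rfl⟩
    have hmem : Function.invFunOn cls Ball c ∈ Ball := Function.invFunOn_mem hex
    exact isGevreyTest_memD hU hh hmem.1
  · intro φ hφ hφ1
    obtain ⟨ψ, hψtest, hψclose⟩ := hφ.2.2 (min (ε/4) 1) (lt_min (by linarith) one_pos)
    have hψsm : ContDiff ℝ (⊤:ℕ∞) ψ := hψtest.1
    have hsubsm : ContDiffOn ℝ (⊤:ℕ∞) (ψ - φ) U := (hψsm.contDiffOn).sub hφ.1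
    have hnegrw : gNorm s h₁ ∞ U (ψ - φ) = gNorm s h₁ ∞ U (φ - ψ) := by
      rw [← neg_sub φ ψ, gNorm_neg]
    have hψball : ψ ∈ Ball := by
      refine ⟨hψtest, ?_⟩
      have heq : φ + (ψ - φ) = ψ := by
        funext x
        simp
      calc gNorm s h₁ ∞ U ψ = gNorm s h₁ ∞ U (φ + (ψ - φ)) := by rw [heq]
        _ ≤ gNorm s h₁ ∞ U φ + gNorm s h₁ ∞ U (ψ - φ) := gNorm_triangle hU hφ.1 hsubsm s h₁
        _ ≤ 1 + ENNReal.ofReal 1 := by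
            apply add_le_add hφ1
            rw [hnegrw]
            exact le_of_lt (hψclose.trans_le (ENNReal.ofReal_le_ofReal (min_le_right _ _)))
        _ = ENNReal.ofReal 2 := by
            rw [ENNReal.ofReal_one]
            rw [show ENNReal.ofReal 2 = 2 by norm_num]
            norm_num
    set ψ₀ := Function.invFunOn cls Ball (cls ψ) with hψ₀def
    have hexψ : ∃ a ∈ Ball, cls a = cls ψ := ⟨ψ, hψball, rfl⟩
    have hψ₀ball : ψ₀ ∈ Ball := Function.invFunOn_mem hexψ
    have hcls_eq : cls ψ₀ = cls ψ := Function.invFunOn_eq hexψ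
    have hψ₀sm : ContDiff ℝ (⊤:ℕ∞) ψ₀ := hψ₀ball.1.1
    refine ⟨ψ₀, ⟨cls ψ, ⟨ψ, hψball, rfl⟩, rfl⟩, ?_⟩
    -- pointwise bound for members of the ball
    have hbd : ∀ χ ∈ Ball, ∀ (β : Fin d → ℕ) (x : Fin d → ℝ),
        ‖pdm β χ x‖ ≤ 2 * (mFact β : ℝ) ^ s / h₁ ^ (mOrder β) := by
      intro χ hχ β x
      exact pdm_pointwise_bound hU hχ.1.1 hχ.1.2.2.1 hh₁ (by norm_num) hχ.2 β x
    -- uniform bound by R for low orders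
    have hRbd : ∀ χ ∈ Ball, ∀ (β : Fin d → ℕ), mOrder β ≤ N → ∀ x,
        ‖pdm β χ x‖ ≤ R := by
      intro χ hχ β hβ x
      have h1 := hbd χ hχ β x
      have h2 : (mFact β : ℝ) ^ s ≤ Qs := by
        apply Real.rpow_le_rpow (by positivity) _ hs0
        rw [hQdef]
        exact_mod_cast mFact_le_of_le (fun i => le_trans (apply_le_mOrder β i) hβ)
      have h3 : 1/h₁ ^ (mOrder β) ≤ Hm := hinvh₁ _ hβ
      calc ‖pdm β χ x‖ ≤ 2 * (mFact β : ℝ) ^ s / h₁ ^ (mOrder β) := h1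
        _ = 2 * ((mFact β : ℝ) ^ s * (1/h₁ ^ (mOrder β))) := by ring
        _ ≤ 2 * (Qs * Hm) := by
            apply mul_le_mul_of_nonneg_left _ (by norm_num)
            apply mul_le_mul h2 h3 (by positivity) hQs0.le
        _ = R := by rw [hRdef]; ring
    -- Lipschitz bound for low orders
    have hLip : ∀ χ ∈ Ball, ∀ (β : Fin d → ℕ), mOrder β < N → ∀ x y,
        ‖pdm β χ x - pdm β χ y‖ ≤ L * ‖x - y‖ := by
      intro χ hχ β hβ x y
      refine le_trans (pdm_lipschitz hU hχ.1.1 hχ.1.2.2.1 hh₁ (by norm_num) hχ.2 β x y) ?_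
      apply mul_le_mul_of_nonneg_right _ (norm_nonneg _)
      calc ∑ i, 2 * (mFact (madd β i) : ℝ) ^ s / h₁ ^ (mOrder β + 1)
          ≤ ∑ _i : Fin d, 2 * Qs * Hm := by
            apply Finset.sum_le_sum
            intro i _
            have h2 : (mFact (madd β i) : ℝ) ^ s ≤ Qs := by
              apply Real.rpow_le_rpow (by positivity) _ hs0
              have : ∀ j, madd β i j ≤ N := by
                intro j
                calc madd β i j ≤ mOrder (madd β i) := apply_le_mOrder _ j
                  _ = mOrder β + 1 := mOrder_madd β i
                  _ ≤ N := hβ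
              rw [hQdef]
              exact_mod_cast mFact_le_of_le this
            have h3 : 1/h₁ ^ (mOrder β + 1) ≤ Hm := hinvh₁ _ hβ
            calc 2 * (mFact (madd β i) : ℝ) ^ s / h₁ ^ (mOrder β + 1)
                = 2 * ((mFact (madd β i) : ℝ) ^ s * (1/h₁ ^ (mOrder β + 1))) := by ring
              _ ≤ 2 * (Qs * Hm) := by
                  apply mul_le_mul_of_nonneg_left _ (by norm_num)
                  apply mul_le_mul h2 h3 (by positivity) hQs0.le
              _ = 2 * Qs * Hm := by ring
        _ = d * (2 * Qs * Hm) := by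
            rw [Finset.sum_const, Finset.card_univ]
            simp [nsmul_eq_mul]
        _ ≤ L := by rw [hLdef]; linarith
    -- the classification condition holds for members of the ball at low orders
    have hcond : ∀ χ ∈ Ball, ∀ p : ↥D, ∃ v ∈ V, dist (pdm p.1.1 χ p.1.2) v < η := by
      intro χ hχ p
      have hp1 : p.1.1 ∈ hIfin.toFinset ∧ p.1.2 ∈ hTfin.toFinset :=
        Finset.mem_product.1 p.2
      have hβ : mOrder p.1.1 < N := hIfin.mem_toFinset.1 hp1.1
      have hin : pdm p.1.1 χ p.1.2 ∈ Metric.closedBall (0:ℂ) R := by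
        rw [Metric.mem_closedBall, dist_zero_right]
        exact hRbd χ hχ p.1.1 hβ.le p.1.2
      have := hVcov hin
      rw [Set.mem_iUnion₂] at this
      obtain ⟨v, hv, hvball⟩ := this
      exact ⟨v, hv, Metric.mem_ball.1 hvball⟩
    -- core estimate
    have hcore : gNorm s h ∞ U (ψ - ψ₀) ≤ ENNReal.ofReal (ε/2) := by
      apply gNorm_le_iff.2
      intro α
      have hw0 : (0:ℝ) ≤ h ^ (mOrder α) / (mFact α : ℝ) ^ s :=
        div_nonneg (pow_nonneg hh.le _) (mFact_rpow_pos s).le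
      by_cases hαN : N ≤ mOrder α
      · -- tail
        have hpt : ∀ x ∈ U, ‖pdm α (ψ - ψ₀) x‖ ≤ 4 * (mFact α : ℝ) ^ s / h₁ ^ (mOrder α) := by
          intro x _
          rw [pdm_sub hψsm hψ₀sm]
          calc ‖(pdm α ψ - pdm α ψ₀) x‖ = ‖pdm α ψ x - pdm α ψ₀ x‖ := rfl
            _ ≤ ‖pdm α ψ x‖ + ‖pdm α ψ₀ x‖ := norm_sub_le _ _
            _ ≤ 2 * (mFact α : ℝ) ^ s / h₁ ^ (mOrder α)
                + 2 * (mFact α : ℝ) ^ s / h₁ ^ (mOrder α) :=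
                add_le_add (hbd ψ hψball α x) (hbd ψ₀ hψ₀ball α x)
            _ = 4 * (mFact α : ℝ) ^ s / h₁ ^ (mOrder α) := by ring
        have h2 : eLpNormEssSup (pdm α (ψ - ψ₀)) (volume.restrict U)
            ≤ ENNReal.ofReal (4 * (mFact α : ℝ) ^ s / h₁ ^ (mOrder α)) :=
          essSup_le_of_forall hU hpt
        calc ENNReal.ofReal (h ^ (mOrder α) / (mFact α : ℝ) ^ s) *
              eLpNormEssSup (pdm α (ψ - ψ₀)) (volume.restrict U)
            ≤ ENNReal.ofReal (h ^ (mOrder α) / (mFact α : ℝ) ^ s) *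
              ENNReal.ofReal (4 * (mFact α : ℝ) ^ s / h₁ ^ (mOrder α)) := mul_le_mul' le_rfl h2
          _ = ENNReal.ofReal ((h ^ (mOrder α) / (mFact α : ℝ) ^ s) *
              (4 * (mFact α : ℝ) ^ s / h₁ ^ (mOrder α))) := (ENNReal.ofReal_mul hw0).symm
          _ ≤ ENNReal.ofReal (ε/2) := by
              apply ENNReal.ofReal_le_ofReal
              have hc : ((mFact α : ℝ) ^ s) ≠ 0 := (mFact_rpow_pos s (α := α)).ne'
              have e2 : (h ^ mOrder α / (mFact α : ℝ) ^ s) *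
                  (4 * (mFact α : ℝ) ^ s / h₁ ^ (mOrder α))
                  = 4 * q ^ (mOrder α) *
                    (((mFact α : ℝ) ^ s) / ((mFact α : ℝ) ^ s)) := by
                rw [hqdef, div_pow]
                field_simp
              rw [e2, div_self hc, mul_one]
              have h3 : q ^ (mOrder α) ≤ q ^ N :=
                pow_le_pow_of_le_one hq0.le hq1.le hαN
              nlinarith [hN, h3]
      · -- low order
        push_neg at hαN
        have hpt : ∀ x ∈ U, ‖pdm α (ψ - ψ₀) x‖ ≤ 2 * (L * δ) + 2 * η := by
          intro x hx
          have hxK : x ∈ closure U := subset_closure hx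
          have := hTcov hxK
          rw [Set.mem_iUnion₂] at this
          obtain ⟨t, htT, hxt⟩ := this
          have hxtd : dist x t < δ := Metric.mem_ball.1 hxt
          have hpD : (α, t) ∈ D :=
            Finset.mem_product.2 ⟨hIfin.mem_toFinset.2 hαN, hTfin.mem_toFinset.2 htT⟩
          set p : ↥D := ⟨(α, t), hpD⟩ with hpdef
          have hcondψ := hcond ψ hψball p
          have hcondψ₀ := hcond ψ₀ hψ₀ball p
          have hclsval : cls ψ p = hcondψ.choose := by
            show (if hp : ∃ v ∈ V, dist (pdm p.1.1 ψ p.1.2) v < η then hp.choose else 0) = _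
            rw [dif_pos hcondψ]
          have hclsval₀ : cls ψ₀ p = hcondψ₀.choose := by
            show (if hp : ∃ v ∈ V, dist (pdm p.1.1 ψ₀ p.1.2) v < η then hp.choose else 0) = _
            rw [dif_pos hcondψ₀]
          have hvψ : dist (pdm α ψ t) (cls ψ p) < η := by
            rw [hclsval]
            exact hcondψ.choose_spec.2
          have hvψ₀ : dist (pdm α ψ₀ t) (cls ψ₀ p) < η := by
            rw [hclsval₀]
            exact hcondψ₀.choose_spec.2
          rw [hcls_eq] at hvψ₀
          rw [pdm_sub hψsm hψ₀sm]
          have htri : dist (pdm α ψ x) (pdm α ψ₀ x)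
              ≤ dist (pdm α ψ x) (pdm α ψ t) + (dist (pdm α ψ t) (cls ψ p)
                + dist (cls ψ p) (pdm α ψ₀ t)) + dist (pdm α ψ₀ t) (pdm α ψ₀ x) := by
            calc dist (pdm α ψ x) (pdm α ψ₀ x)
                ≤ dist (pdm α ψ x) (pdm α ψ t) + dist (pdm α ψ t) (pdm α ψ₀ t)
                  + dist (pdm α ψ₀ t) (pdm α ψ₀ x) := dist_triangle4 _ _ _ _
              _ ≤ _ := by
                  gcongr
                  exact dist_triangle _ _ _
          have hL1' : dist (pdm α ψ x) (pdm α ψ t) ≤ L * δ := by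
            rw [dist_eq_norm]
            calc ‖pdm α ψ x - pdm α ψ t‖ ≤ L * ‖x - t‖ := hLip ψ hψball α hαN x t
              _ ≤ L * δ := by
                  apply mul_le_mul_of_nonneg_left _ hL0.le
                  rw [← dist_eq_norm]
                  exact hxtd.le
          have hL2' : dist (pdm α ψ₀ t) (pdm α ψ₀ x) ≤ L * δ := by
            rw [dist_eq_norm]
            calc ‖pdm α ψ₀ t - pdm α ψ₀ x‖ ≤ L * ‖t - x‖ := hLip ψ₀ hψ₀ball α hαN t x
              _ ≤ L * δ := by
                  apply mul_le_mul_of_nonneg_left _ hL0.le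
                  rw [← dist_eq_norm, dist_comm]
                  exact hxtd.le
          show ‖(pdm α ψ - pdm α ψ₀) x‖ ≤ _
          have : ‖(pdm α ψ - pdm α ψ₀) x‖ = dist (pdm α ψ x) (pdm α ψ₀ x) := by
            rw [dist_eq_norm]; rfl
          rw [this]
          have hd2 : dist (cls ψ p) (pdm α ψ₀ t) < η := by
            rw [dist_comm]; exact hvψ₀
          linarith [htri, hL1', hL2', hvψ, hd2]
        have h2 : eLpNormEssSup (pdm α (ψ - ψ₀)) (volume.restrict U)
            ≤ ENNReal.ofReal (2 * (L * δ) + 2 * η) := essSup_le_of_forall hU hpt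
        calc ENNReal.ofReal (h ^ (mOrder α) / (mFact α : ℝ) ^ s) *
              eLpNormEssSup (pdm α (ψ - ψ₀)) (volume.restrict U)
            ≤ ENNReal.ofReal (h ^ (mOrder α) / (mFact α : ℝ) ^ s) *
              ENNReal.ofReal (2 * (L * δ) + 2 * η) := mul_le_mul' le_rfl h2
          _ = ENNReal.ofReal ((h ^ (mOrder α) / (mFact α : ℝ) ^ s) *
              (2 * (L * δ) + 2 * η)) := (ENNReal.ofReal_mul hw0).symm
          _ ≤ ENNReal.ofReal (ε/2) := by
              apply ENNReal.ofReal_le_ofReal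
              have hwW : h ^ (mOrder α) / (mFact α : ℝ) ^ s ≤ W := by
                calc h ^ (mOrder α) / (mFact α : ℝ) ^ s ≤ h ^ (mOrder α) / 1 :=
                      div_le_div_of_nonneg_left (pow_nonneg hh.le _) one_pos
                        (one_le_mFact_rpow hs0)
                  _ = h ^ (mOrder α) := div_one _
                  _ ≤ (max 1 h) ^ (mOrder α) := pow_le_pow_left₀ hh.le (le_max_right _ _) _
                  _ ≤ W := pow_le_pow_right₀ (le_max_left _ _) hαN.le
              have hsum0 : (0:ℝ) ≤ 2 * (L * δ) + 2 * η := by positivity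
              have hLδ : L * δ = ε / (32 * W) := by
                rw [hδdef]
                field_simp
              have hWsum : W * (2 * (L * δ) + 2 * η) = ε / 8 := by
                rw [hLδ, hηdef]
                field_simp
                ring
              calc (h ^ (mOrder α) / (mFact α : ℝ) ^ s) * (2 * (L * δ) + 2 * η)
                  ≤ W * (2 * (L * δ) + 2 * η) := mul_le_mul_of_nonneg_right hwW hsum0
                _ = ε / 8 := hWsum
                _ ≤ ε / 2 := by linarith
    -- final assembly
    have hφψsm : ContDiffOn ℝ (⊤:ℕ∞) (φ - ψ) U := hφ.1.sub hψsm.contDiffOn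
    have hψψ₀sm : ContDiffOn ℝ (⊤:ℕ∞) (ψ - ψ₀) U := (hψsm.sub hψ₀sm).contDiffOn
    calc gNorm s h ∞ U (φ - ψ₀) = gNorm s h ∞ U ((φ - ψ) + (ψ - ψ₀)) := by
          rw [sub_add_sub_cancel]
      _ ≤ gNorm s h ∞ U (φ - ψ) + gNorm s h ∞ U (ψ - ψ₀) := gNorm_triangle hU hφψsm hψψ₀sm s h
      _ ≤ ENNReal.ofReal (ε/4) + ENNReal.ofReal (ε/2) := by
          apply add_le_add _ hcore
          calc gNorm s h ∞ U (φ - ψ) ≤ gNorm s h₁ ∞ U (φ - ψ) :=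
                gNorm_mono_h hh.le hh1.le U _
            _ ≤ ENNReal.ofReal (ε/4) := le_of_lt (hψclose.trans_le
                (ENNReal.ofReal_le_ofReal (min_le_left _ _)))
      _ = ENNReal.ofReal (3*ε/4) := by
          rw [← ENNReal.ofReal_add (by linarith) (by linarith)]
          norm_num
          ring_nf
      _ < ENNReal.ofReal ε := (ENNReal.ofReal_lt_ofReal_iff hε).2 (by linarith)
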